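/- Let T be a positively edge-weighted phylogenetic X-tree with |X| = n, let 2 ≤ m ≤ n, let D be the m-subtree weight map of T, and let S_D(i,j) = Σ D({i,j} ∪ Y), the sum over all (m−2)-element subsets Y of X \ {i,j}. Let (a,b;c,d) be a tree quartet of T whose splitting path (the set of edges lying both on the path from a to c and on the path from b to d) consists of exactly one edge e. Then S_D(a,b) + S_D(c,d) − S_D(a,c) − S_D(b,d) = −[C(|L_a(e)|−2, m−2) + C(|L_c(e)|−2, m−2)]·w(e), where C(·,·) denotes the binomial coefficient. -/

import Mathlib

open SimpleGraph Finset

attribute [local instance] Classical.propDecidable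

noncomputable section

/-- `e` lies on some path (hence on the unique path, in a tree) from `a` to `b`. -/
def OnPath {V : Type*} (G : SimpleGraph V) (a b : V) (e : Sym2 V) : Prop :=
  ∃ p : G.Walk a b, p.IsPath ∧ e ∈ p.edges

/-- The edge set `[R]` of the smallest subtree of a tree `G` spanning `R`. -/
def subtreeEdges {V : Type*} [Fintype V] (G : SimpleGraph V) (R : Finset V) :
    Finset (Sym2 V) :=
  G.edgeFinset.filter fun e => ∃ a ∈ R, ∃ b ∈ R, OnPath G a b e

/-- The subtree weight `D(R) = ∑_{e ∈ [R]} w(e)`. -/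
def subtreeWeight {V : Type*} [Fintype V] (G : SimpleGraph V) (w : Sym2 V → ℝ)
    (R : Finset V) : ℝ :=
  ∑ e ∈ subtreeEdges G R, w e

/-- `L_i(e)`: the set of leaves in the component of `T - e` containing `i`. -/
def leafSide {V : Type*} [Fintype V] (G : SimpleGraph V) (X : Finset V)
    (i : V) (e : Sym2 V) : Finset V :=
  X.filter fun x => (G.deleteEdges {e}).Reachable i x

/-- `S_D(i,j) = ∑_{Y ∈ C(X \ {i,j}, m-2)} D({i,j} ∪ Y)`. -/
def SDmap {V : Type*} [Fintype V] (G : SimpleGraph V) (w : Sym2 V → ℝ)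
    (X : Finset V) (m : ℕ) (i j : V) : ℝ :=
  ∑ Y ∈ ((X.erase i).erase j).powersetCard (m - 2),
    subtreeWeight G w (insert i (insert j Y))

/-- Binomial coefficient with integer arguments, `0` whenever `b < 0` or `a < b`. -/
def C (a b : ℤ) : ℤ := if 0 ≤ b ∧ b ≤ a then (a.toNat.choose b.toNat : ℤ) else 0

/-- `(i,j;k,l)` is a tree quartet: the (unique) path from `i` to `j` and the (unique) path
from `k` to `l` share no edges. -/
def IsQuartet {V : Type*} (G : SimpleGraph V) (i j k l : V) : Prop :=
  ∀ (p : G.Walk i j) (q : G.Walk k l), p.IsPath → q.IsPath →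
    ∀ e ∈ p.edges, e ∉ q.edges

section Aux

variable {V : Type*}

private lemma sym2_exists_eq (e : Sym2 V) : ∃ u v : V, e = s(u, v) :=
  e.ind fun u v => ⟨u, v, rfl⟩

/-- Decomposition of a trail containing the edge `s(u,v)`. -/
private lemma walk_decomp {G : SimpleGraph V} {u v x y : V} (p : G.Walk x y)
    (hp : p.edges.Nodup) (he : s(u, v) ∈ p.edges) :
    ((G.deleteEdges {s(u, v)}).Reachable x u ∧ (G.deleteEdges {s(u, v)}).Reachable v y) ∨
      ((G.deleteEdges {s(u, v)}).Reachable x v ∧ (G.deleteEdges {s(u, v)}).Reachable u y) := by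
  induction p with
  | nil => simp at he
  | @cons x' z y' h q ih =>
    simp only [SimpleGraph.Walk.edges_cons, List.mem_cons] at he
    rw [SimpleGraph.Walk.edges_cons, List.nodup_cons] at hp
    rcases he with heq | hmem
    · have hq' : ∀ e', e' ∈ q.edges → e' ∉ ({s(u, v)} : Set (Sym2 V)) := by
        intro e' he' hmem'
        rw [Set.mem_singleton_iff] at hmem'
        rw [hmem', heq] at he'
        exact hp.1 he'
      have hzy : (G.deleteEdges {s(u, v)}).Reachable z y' := ⟨q.toDeleteEdges _ hq'⟩
      rcases Sym2.eq_iff.mp heq with ⟨rfl, rfl⟩ | ⟨rfl, rfl⟩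
      · exact Or.inl ⟨SimpleGraph.Reachable.refl _, hzy⟩
      · exact Or.inr ⟨SimpleGraph.Reachable.refl _, hzy⟩
    · have hne : s(x', z) ≠ s(u, v) := fun hh => hp.1 (hh ▸ hmem)
      have hadj : (G.deleteEdges {s(u, v)}).Adj x' z := by
        rw [SimpleGraph.deleteEdges_adj]
        exact ⟨h, by simpa using hne⟩
      rcases ih hp.2 hmem with ⟨h1, h2⟩ | ⟨h1, h2⟩
      · exact Or.inl ⟨hadj.reachable.trans h1, h2⟩
      · exact Or.inr ⟨hadj.reachable.trans h1, h2⟩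

private lemma tree_bridge {G : SimpleGraph V} (hT : G.IsTree) {u v : V} (h : G.Adj u v) :
    ¬ (G.deleteEdges {s(u, v)}).Reachable u v :=
  ((SimpleGraph.isBridge_iff.mp
    ((SimpleGraph.isAcyclic_iff_forall_adj_isBridge.mp hT.IsAcyclic) h)))

/-- In a tree, an edge lies on the path from `x` to `y` iff deleting it disconnects
`x` from `y`. -/
private lemma onPath_iff {G : SimpleGraph V} (hT : G.IsTree) {e : Sym2 V}
    (he : e ∈ G.edgeSet) (x y : V) :
    OnPath G x y e ↔ ¬ (G.deleteEdges {e}).Reachable x y := by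
  obtain ⟨u, v, rfl⟩ := sym2_exists_eq e
  have hadj : G.Adj u v := he
  constructor
  · rintro ⟨p, hp, hmem⟩ hr
    rcases walk_decomp p hp.edges_nodup hmem with ⟨h1, h2⟩ | ⟨h1, h2⟩
    · exact tree_bridge hT hadj (h1.symm.trans (hr.trans h2.symm))
    · exact tree_bridge hT hadj ((h2.trans hr.symm).trans h1)
  · intro hr
    obtain ⟨p⟩ := hT.isConnected.preconnected x y
    refine ⟨(p.toPath : G.Walk x y), p.toPath.2, ?_⟩
    by_contra hmem
    exact hr ⟨(p.toPath : G.Walk x y).toDeleteEdges _ (fun e' he' hc => by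
      rw [Set.mem_singleton_iff] at hc
      exact hmem (hc ▸ he'))⟩

/-- Deleting one edge of a tree leaves (at most) two components: given any three
vertices, two of them are in the same component. -/
private lemma side_or {G : SimpleGraph V} (hT : G.IsTree) {e : Sym2 V}
    (he : e ∈ G.edgeSet) (x y z : V) :
    (G.deleteEdges {e}).Reachable x y ∨ (G.deleteEdges {e}).Reachable x z ∨
      (G.deleteEdges {e}).Reachable y z := by
  obtain ⟨u, v, rfl⟩ := sym2_exists_eq e
  have key : ∀ t : V, (G.deleteEdges {s(u, v)}).Reachable t u ∨
      (G.deleteEdges {s(u, v)}).Reachable t v := by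
    intro t
    obtain ⟨p⟩ := hT.isConnected.preconnected t u
    by_cases hm : s(u, v) ∈ (p.toPath : G.Walk t u).edges
    · rcases walk_decomp _ (p.toPath.2.edges_nodup) hm with ⟨h1, _⟩ | ⟨h1, _⟩
      · exact Or.inl h1
      · exact Or.inr h1
    · exact Or.inl ⟨(p.toPath : G.Walk t u).toDeleteEdges _ (fun e' he' hc => by
        rw [Set.mem_singleton_iff] at hc
        exact hm (hc ▸ he'))⟩
  rcases key x with hx | hx <;> rcases key y with hy | hy <;> rcases key z with hz | hz <;>
    first
      | exact Or.inl (hx.trans hy.symm)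
      | exact Or.inr (Or.inl (hx.trans hz.symm))
      | exact Or.inr (Or.inr (hy.trans hz.symm))

private lemma leafSide_eq {W : Type*} [Fintype W] {G : SimpleGraph W} {X : Finset W}
    {e : Sym2 W} {i j : W} (h : (G.deleteEdges {e}).Reachable i j) :
    leafSide G X i e = leafSide G X j e := by
  ext x
  simp only [leafSide, Finset.mem_filter, and_congr_right_iff]
  exact fun _ => ⟨fun hx => h.symm.trans hx, fun hx => h.trans hx⟩

private lemma SDmap_eq {W : Type*} [Fintype W] (G : SimpleGraph W) (w : Sym2 W → ℝ)
    (X : Finset W) (m : ℕ) (i j : W) :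
    SDmap G w X m i j = ∑ f ∈ G.edgeFinset,
      (((((X.erase i).erase j).powersetCard (m - 2)).filter
          (fun Y => ∃ x ∈ insert i (insert j Y), ∃ y ∈ insert i (insert j Y),
            OnPath G x y f)).card : ℝ) * w f := by
  unfold SDmap subtreeWeight subtreeEdges
  simp only [Finset.sum_filter]
  rw [Finset.sum_comm]
  refine Finset.sum_congr rfl fun f _ => ?_
  rw [← Finset.sum_filter, Finset.sum_const, nsmul_eq_mul]

/-- The number of `(m-2)`-subsets `Y` of `X \ {i,j}` such that `{i,j} ∪ Y` crosses the
edge `f` of the tree `G`. -/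
private lemma card_cross {W : Type*} [Fintype W] {G : SimpleGraph W} (hT : G.IsTree)
    {X : Finset W} {f : Sym2 W} (hf : f ∈ G.edgeSet) {i j : W}
    (hi : i ∈ X) (hj : j ∈ X) (hij : i ≠ j) (k : ℕ) :
    (((((X.erase i).erase j).powersetCard k).filter
        (fun Y => ∃ x ∈ insert i (insert j Y), ∃ y ∈ insert i (insert j Y),
          OnPath G x y f)).card : ℝ) =
      ((X.card - 2).choose k : ℝ) -
        (if (G.deleteEdges {f}).Reachable i j
          then ((((leafSide G X i f).card - 2).choose k : ℕ) : ℝ) else 0) := by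
  have hji : j ∈ X.erase i := Finset.mem_erase.mpr ⟨hij.symm, hj⟩
  have htotal : (((X.erase i).erase j).powersetCard k).card = (X.card - 2).choose k := by
    rw [Finset.card_powersetCard, Finset.card_erase_of_mem hji,
      Finset.card_erase_of_mem hi, Nat.sub_sub]
  by_cases hR : (G.deleteEdges {f}).Reachable i j
  · rw [if_pos hR]
    set B : Finset W :=
      ((X.erase i).erase j).filter (fun x => (G.deleteEdges {f}).Reachable i x) with hB
    have hkey : ∀ Y ∈ ((X.erase i).erase j).powersetCard k,
        (¬ ∃ x ∈ insert i (insert j Y), ∃ y ∈ insert i (insert j Y), OnPath G x y f) ↔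
          Y ⊆ B := by
      intro Y hY
      rw [Finset.mem_powersetCard] at hY
      constructor
      · intro hnc x hx
        rw [hB, Finset.mem_filter]
        refine ⟨hY.1 hx, ?_⟩
        by_contra hnr
        exact hnc ⟨i, Finset.mem_insert_self _ _,
          x, Finset.mem_insert_of_mem (Finset.mem_insert_of_mem hx),
          (onPath_iff hT hf i x).mpr hnr⟩
      · rintro hsub ⟨x, hx, y, hy, hop⟩
        have hall : ∀ z ∈ insert i (insert j Y), (G.deleteEdges {f}).Reachable i z := by
          intro z hz
          rcases Finset.mem_insert.mp hz with rfl | hz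
          · exact SimpleGraph.Reachable.refl _
          · rcases Finset.mem_insert.mp hz with rfl | hz
            · exact hR
            · exact (Finset.mem_filter.mp (hsub hz)).2
        exact (onPath_iff hT hf x y).mp hop ((hall x hx).symm.trans (hall y hy))
    have hadd0 := Finset.card_filter_add_card_filter_not
      (s := ((X.erase i).erase j).powersetCard k)
      (p := fun Y => ∃ x ∈ insert i (insert j Y), ∃ y ∈ insert i (insert j Y), OnPath G x y f)
    have hadd : ((((X.erase i).erase j).powersetCard k).filter
          (fun Y => ∃ x ∈ insert i (insert j Y), ∃ y ∈ insert i (insert j Y),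
            OnPath G x y f)).card +
        ((((X.erase i).erase j).powersetCard k).filter
          (fun Y => ¬ ∃ x ∈ insert i (insert j Y), ∃ y ∈ insert i (insert j Y),
            OnPath G x y f)).card = (((X.erase i).erase j).powersetCard k).card := by
      convert hadd0 using 2 <;> congr!
    clear hadd0
    have hBsub : B ⊆ (X.erase i).erase j := Finset.filter_subset _ _
    have hneg : (((X.erase i).erase j).powersetCard k).filter
        (fun Y => ¬ ∃ x ∈ insert i (insert j Y), ∃ y ∈ insert i (insert j Y),
          OnPath G x y f) = B.powersetCard k := by
      ext Y
      simp only [Finset.mem_filter, Finset.mem_powersetCard]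
      constructor
      · rintro ⟨hY, hnc⟩
        exact ⟨(hkey Y (Finset.mem_powersetCard.mpr hY)).mp hnc, hY.2⟩
      · rintro ⟨hb, hc⟩
        have hY : Y ⊆ (X.erase i).erase j ∧ Y.card = k := ⟨hb.trans hBsub, hc⟩
        exact ⟨hY, (hkey Y (Finset.mem_powersetCard.mpr hY)).mpr hb⟩
    have hBeq : B = ((leafSide G X i f).erase i).erase j := by
      ext x
      simp only [hB, leafSide, Finset.mem_filter, Finset.mem_erase]
      tauto
    have hiL : i ∈ leafSide G X i f :=
      Finset.mem_filter.mpr ⟨hi, SimpleGraph.Reachable.refl _⟩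
    have hjL : j ∈ (leafSide G X i f).erase i :=
      Finset.mem_erase.mpr ⟨hij.symm, Finset.mem_filter.mpr ⟨hj, hR⟩⟩
    have hBcard : B.card = (leafSide G X i f).card - 2 := by
      rw [hBeq, Finset.card_erase_of_mem hjL, Finset.card_erase_of_mem hiL]
      omega
    rw [hneg, Finset.card_powersetCard, hBcard, htotal] at hadd
    have := congrArg (Nat.cast : ℕ → ℝ) hadd
    push_cast at this
    linarith
  · rw [if_neg hR, sub_zero, ← htotal]
    norm_cast
    have key : ∀ (h : DecidablePred (fun Y : Finset W =>
        ∃ x ∈ insert i (insert j Y), ∃ y ∈ insert i (insert j Y), OnPath G x y f)),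
        @Finset.filter _ _ h (((X.erase i).erase j).powersetCard k)
          = ((X.erase i).erase j).powersetCard k := by
      intro h
      ext Y
      simp only [Finset.mem_filter, and_iff_left_iff_imp]
      intro _
      exact ⟨i, Finset.mem_insert_self _ _,
        j, Finset.mem_insert_of_mem (Finset.mem_insert_self _ _),
        (onPath_iff hT hf i j).mpr hR⟩
    rw [key]

private lemma C_cast (l m : ℕ) (hl : 2 ≤ l) (hm : 2 ≤ m) :
    ((C ((l : ℤ) - 2) ((m : ℤ) - 2) : ℤ) : ℝ) = (((l - 2).choose (m - 2) : ℕ) : ℝ) := by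
  unfold C
  have h1 : ((l : ℤ) - 2).toNat = l - 2 := by omega
  have h2 : ((m : ℤ) - 2).toNat = m - 2 := by omega
  by_cases h : (m : ℤ) - 2 ≤ (l : ℤ) - 2
  · rw [if_pos ⟨by omega, h⟩, h1, h2]
    push_cast
    ring
  · rw [if_neg (by tauto)]
    have hlt : l - 2 < m - 2 := by omega
    rw [Nat.choose_eq_zero_of_lt hlt]
    simp

end Aux

/-- Lemma 3 of Levy–Yoshida–Pachter: if the splitting path of the tree
quartet `(a,b;c,d)` consists of the single edge `e`, then
`S_D(a,b) + S_D(c,d) - S_D(a,c) - S_D(b,d)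
  = -(C(|L_a(e)|-2, m-2) + C(|L_c(e)|-2, m-2))·w(e)`. -/
theorem SD_single_splitting_edge
    {V : Type*} [Fintype V] (G : SimpleGraph V) (X : Finset V)
    (hT : G.IsTree)
    (hleaf : ∀ v : V, G.degree v = 1 ↔ v ∈ X)
    (hint : ∀ v : V, v ∉ X → 3 ≤ G.degree v)
    (w : Sym2 V → ℝ) (hw : ∀ e ∈ G.edgeSet, 0 < w e)
    (m : ℕ) (hm : 2 ≤ m) (hmn : m ≤ X.card)
    (a b c d : V) (ha : a ∈ X) (hb : b ∈ X) (hc : c ∈ X) (hd : d ∈ X)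
    (hab : a ≠ b) (hac : a ≠ c) (had : a ≠ d)
    (hbc : b ≠ c) (hbd : b ≠ d) (hcd : c ≠ d)
    (hq : IsQuartet G a b c d)
    -- the splitting path of `(a,b;c,d)` consists of exactly the edge `e`
    (e : Sym2 V)
    (hsplit : G.edgeFinset.filter (fun e' => OnPath G a c e' ∧ OnPath G b d e') = {e}) :
    SDmap G w X m a b + SDmap G w X m c d
        - SDmap G w X m a c - SDmap G w X m b d =
      - ((C (((leafSide G X a e).card : ℤ) - 2) ((m : ℤ) - 2) : ℝ) +
          (C (((leafSide G X c e).card : ℤ) - 2) ((m : ℤ) - 2) : ℝ)) * w e := by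
  classical
  -- basic facts about `e`
  have he_filter : e ∈ G.edgeFinset.filter (fun e' => OnPath G a c e' ∧ OnPath G b d e') := by
    rw [hsplit]; exact Finset.mem_singleton_self e
  have heE : e ∈ G.edgeSet := by
    have := (Finset.mem_filter.mp he_filter).1
    rwa [SimpleGraph.mem_edgeFinset] at this
  have heac : ¬ (G.deleteEdges {e}).Reachable a c :=
    (onPath_iff hT heE a c).mp (Finset.mem_filter.mp he_filter).2.1
  have hebd : ¬ (G.deleteEdges {e}).Reachable b d :=
    (onPath_iff hT heE b d).mp (Finset.mem_filter.mp he_filter).2.2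
  -- the quartet hypothesis: no edge separates both `a,b` and `c,d`
  have hquart : ∀ f ∈ G.edgeSet,
      (G.deleteEdges {f}).Reachable a b ∨ (G.deleteEdges {f}).Reachable c d := by
    intro f hf
    by_contra hcon
    push_neg at hcon
    obtain ⟨p, hp, hpm⟩ := (onPath_iff hT hf a b).mpr hcon.1
    obtain ⟨q, hqp, hqm⟩ := (onPath_iff hT hf c d).mpr hcon.2
    exact hq p q hp hqp f hpm hqm
  -- only `e` separates both `a,c` and `b,d`
  have hsplit' : ∀ f ∈ G.edgeSet, f ≠ e →
      (G.deleteEdges {f}).Reachable a c ∨ (G.deleteEdges {f}).Reachable b d := by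
    intro f hf hne
    by_contra hcon
    push_neg at hcon
    have hmem : f ∈ G.edgeFinset.filter (fun e' => OnPath G a c e' ∧ OnPath G b d e') :=
      Finset.mem_filter.mpr ⟨SimpleGraph.mem_edgeFinset.mpr hf,
        (onPath_iff hT hf a c).mpr hcon.1, (onPath_iff hT hf b d).mpr hcon.2⟩
    rw [hsplit] at hmem
    exact hne (Finset.mem_singleton.mp hmem)
  -- at `e`, the pairs `a,b` and `c,d` are on the same side
  have heab : (G.deleteEdges {e}).Reachable a b := by
    by_contra h
    rcases side_or hT heE a b c with h1 | h1 | h1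
    · exact h h1
    · exact heac h1
    · rcases hquart e heE with h2 | h2
      · exact h h2
      · exact hebd (h1.trans h2)
  have hecd : (G.deleteEdges {e}).Reachable c d := by
    by_contra h
    rcases side_or hT heE c d a with h1 | h1 | h1
    · exact h h1
    · exact heac h1.symm
    · rcases hquart e heE with h2 | h2
      · exact hebd ((h1.trans h2).symm)
      · exact h h2
  -- rewrite the four `SDmap`s as sums over edges and combine
  rw [SDmap_eq, SDmap_eq, SDmap_eq, SDmap_eq, ← Finset.sum_add_distrib,
    ← Finset.sum_sub_distrib, ← Finset.sum_sub_distrib]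
  have h0 : ∀ f ∈ G.edgeFinset, f ≠ e →
      ((((((X.erase a).erase b).powersetCard (m - 2)).filter
          (fun Y => ∃ x ∈ insert a (insert b Y), ∃ y ∈ insert a (insert b Y),
            OnPath G x y f)).card : ℝ) * w f +
        (((((X.erase c).erase d).powersetCard (m - 2)).filter
          (fun Y => ∃ x ∈ insert c (insert d Y), ∃ y ∈ insert c (insert d Y),
            OnPath G x y f)).card : ℝ) * w f -
        (((((X.erase a).erase c).powersetCard (m - 2)).filter
          (fun Y => ∃ x ∈ insert a (insert c Y), ∃ y ∈ insert a (insert c Y),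
            OnPath G x y f)).card : ℝ) * w f -
        (((((X.erase b).erase d).powersetCard (m - 2)).filter
          (fun Y => ∃ x ∈ insert b (insert d Y), ∃ y ∈ insert b (insert d Y),
            OnPath G x y f)).card : ℝ) * w f) = 0 := by
    intro f hf hne
    have hfE : f ∈ G.edgeSet := SimpleGraph.mem_edgeFinset.mp hf
    rw [card_cross hT hfE ha hb hab, card_cross hT hfE hc hd hcd,
      card_cross hT hfE ha hc hac, card_cross hT hfE hb hd hbd]
    set K : ℝ := ((X.card - 2).choose (m - 2) : ℝ) with hK
    set R : V → V → Prop := fun x y => (G.deleteEdges {f}).Reachable x y with hRdef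
    have hRR : ∀ x y : V, (G.deleteEdges {f}).Reachable x y = R x y := fun _ _ => rfl
    have hzero :
        (K - (if R a b then ((((leafSide G X a f).card - 2).choose (m - 2) : ℕ) : ℝ) else 0)) +
        (K - (if R c d then ((((leafSide G X c f).card - 2).choose (m - 2) : ℕ) : ℝ) else 0)) -
        (K - (if R a c then ((((leafSide G X a f).card - 2).choose (m - 2) : ℕ) : ℝ) else 0)) -
        (K - (if R b d then ((((leafSide G X b f).card - 2).choose (m - 2) : ℕ) : ℝ) else 0))
          = 0 := by
      by_cases hRab : R a b <;> by_cases hRcd : R c d <;>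
        by_cases hRac : R a c <;> by_cases hRbd : R b d
      · -- all on one side
        rw [if_pos hRab, if_pos hRcd, if_pos hRac, if_pos hRbd,
          leafSide_eq (hRab.symm.trans hRac : (G.deleteEdges {f}).Reachable b c)]
        ring
      · exact absurd (hRab.symm.trans (hRac.trans hRcd)) hRbd
      · exact absurd (hRab.trans (hRbd.trans hRcd.symm)) hRac
      · rcases hsplit' f hfE hne with h | h
        · exact absurd h hRac
        · exact absurd h hRbd
      · exact absurd (hRac.symm.trans (hRab.trans hRbd)) hRcd
      · -- d alone
        rw [if_pos hRab, if_neg hRcd, if_pos hRac, if_neg hRbd]; ring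
      · -- c alone
        rw [if_pos hRab, if_neg hRcd, if_neg hRac, if_pos hRbd,
          leafSide_eq (hRab.symm : (G.deleteEdges {f}).Reachable b a)]
        ring
      · rcases hsplit' f hfE hne with h | h
        · exact absurd h hRac
        · exact absurd h hRbd
      · exact absurd (hRac.trans (hRcd.trans hRbd.symm)) hRab
      · -- b alone
        rw [if_neg hRab, if_pos hRcd, if_pos hRac, if_neg hRbd,
          leafSide_eq (hRac : (G.deleteEdges {f}).Reachable a c)]
        ring
      · -- a alone
        have hbc : R b c := by
          rcases side_or hT hfE a b c with h | h | h
          · exact absurd h hRab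
          · exact absurd h hRac
          · exact h
        rw [if_neg hRab, if_pos hRcd, if_neg hRac, if_pos hRbd,
          leafSide_eq (hbc : (G.deleteEdges {f}).Reachable b c)]
        ring
      · rcases hsplit' f hfE hne with h | h
        · exact absurd h hRac
        · exact absurd h hRbd
      all_goals
        rcases hquart f hfE with h | h
        · exact absurd h hRab
        · exact absurd h hRcd
    simp only [hRR]
    calc _ = ((K - (if R a b then ((((leafSide G X a f).card - 2).choose (m - 2) : ℕ) : ℝ) else 0)) +
        (K - (if R c d then ((((leafSide G X c f).card - 2).choose (m - 2) : ℕ) : ℝ) else 0)) -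
        (K - (if R a c then ((((leafSide G X a f).card - 2).choose (m - 2) : ℕ) : ℝ) else 0)) -
        (K - (if R b d then ((((leafSide G X b f).card - 2).choose (m - 2) : ℕ) : ℝ) else 0))) * w f := by
          ring
      _ = 0 := by rw [hzero, zero_mul]
  rw [Finset.sum_eq_single_of_mem e (SimpleGraph.mem_edgeFinset.mpr heE) h0]
  -- evaluate the term at `e`
  rw [card_cross hT heE ha hb hab, card_cross hT heE hc hd hcd,
    card_cross hT heE ha hc hac, card_cross hT heE hb hd hbd,
    if_pos heab, if_pos hecd, if_neg heac, if_neg hebd]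
  have h2a : 2 ≤ (leafSide G X a e).card := by
    have hsub : ({a, b} : Finset V) ⊆ leafSide G X a e := by
      intro x hx
      rcases Finset.mem_insert.mp hx with rfl | hx
      · exact Finset.mem_filter.mpr ⟨ha, SimpleGraph.Reachable.refl _⟩
      · rw [Finset.mem_singleton] at hx
        subst hx
        exact Finset.mem_filter.mpr ⟨hb, heab⟩
    calc 2 = ({a, b} : Finset V).card := (Finset.card_pair hab).symm
      _ ≤ _ := Finset.card_le_card hsub
  have h2c : 2 ≤ (leafSide G X c e).card := by
    have hsub : ({c, d} : Finset V) ⊆ leafSide G X c e := by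
      intro x hx
      rcases Finset.mem_insert.mp hx with rfl | hx
      · exact Finset.mem_filter.mpr ⟨hc, SimpleGraph.Reachable.refl _⟩
      · rw [Finset.mem_singleton] at hx
        subst hx
        exact Finset.mem_filter.mpr ⟨hd, hecd⟩
    calc 2 = ({c, d} : Finset V).card := (Finset.card_pair hcd).symm
      _ ≤ _ := Finset.card_le_card hsub
  rw [C_cast _ m h2a hm, C_cast _ m h2c hm]
  ring
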